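/- Let A ∈ ℝ^{m×m}, B ∈ ℝ^{m×1}, C ∈ ℝ^{1×m}, real scalars α < β, ε > 0. Suppose (P, L, J), with P symmetric positive definite, L ∈ ℝ^{p×m}, J ∈ ℝ^p, satisfy the ε-KYP conditions for (A − αBC, B, C, 1/(β−α)): P(A − αBC) + (A − αBC)ᵀP = −LᵀL − (ε/2)P, PB = Cᵀ − LᵀJ, JᵀJ = 2/(β−α). Let n : ℝ × ℝ → ℝ be continuous and satisfy the sector condition (n(t,y) − αy)·(βy − n(t,y)) ≥ 0 for all t and y. Let x : [0, ∞) → ℝ^m be differentiable with x'(t) = A x(t) − B n(t, C x(t)) for all t ≥ 0. Then (1/2) x(t)ᵀ P x(t) ≤ (1/2) x(0)ᵀ P x(0) · e^{−(ε/2)t} for all t ≥ 0, and consequently x(t) → 0 as t → ∞. -/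

import Mathlib

open Matrix Filter


lemma vmv {m : ℕ} (B C v : Fin m → ℝ) : (vecMulVec B C).mulVec v = (C ⬝ᵥ v) • B := by
  ext i
  simp [vecMulVec_apply, mulVec, dotProduct, Finset.mul_sum, mul_comm, mul_left_comm]

lemma key_ineq {m p : ℕ}
    (A : Matrix (Fin m) (Fin m) ℝ) (B : Fin m → ℝ) (C : Fin m → ℝ)
    (α β ε : ℝ) (hαβ : α < β)
    (P : Matrix (Fin m) (Fin m) ℝ) (hPsymm : Pᵀ = P)
    (L : Matrix (Fin p) (Fin m) ℝ) (J : Fin p → ℝ)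
    (hKYP1 : P * (A - α • vecMulVec B C) + (A - α • vecMulVec B C)ᵀ * P
                = -(Lᵀ * L) - (ε / 2) • P)
    (hKYP2 : P.mulVec B = C - Lᵀ.mulVec J)
    (hKYP3 : J ⬝ᵥ J = 2 / (β - α))
    (v : Fin m → ℝ)
    (N : ℝ) (hsector : 0 ≤ (N - α * (C ⬝ᵥ v)) * (β * (C ⬝ᵥ v) - N)) :
    (A.mulVec v - N • B) ⬝ᵥ P.mulVec v + v ⬝ᵥ P.mulVec (A.mulVec v - N • B)
      ≤ -(ε / 2) * (v ⬝ᵥ P.mulVec v) := by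
  set y := C ⬝ᵥ v with hy
  set ν := N - α * y with hν
  set Ahat := A - α • vecMulVec B C with hAhat
  set w := L.mulVec v with hw
  have hd : A.mulVec v - N • B = Ahat.mulVec v - ν • B := by
    rw [hAhat, sub_mulVec, Matrix.smul_mulVec, vmv]
    ext i; simp [hν]; ring
  have hPB : v ⬝ᵥ P.mulVec B = y - J ⬝ᵥ w := by
    rw [hKYP2, dotProduct_sub, hw, dotProduct_mulVec, vecMul_transpose,
      dotProduct_comm (L *ᵥ v) J, dotProduct_comm v C]
  have hBP : B ⬝ᵥ P.mulVec v = y - J ⬝ᵥ w := by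
    rw [dotProduct_mulVec, ← mulVec_transpose, hPsymm, dotProduct_comm, hPB]
  have hAP : Ahat.mulVec v ⬝ᵥ P.mulVec v = v ⬝ᵥ (P * Ahat).mulVec v := by
    rw [dotProduct_mulVec, ← mulVec_transpose, hPsymm, mulVec_mulVec, dotProduct_comm]
  have hPA : v ⬝ᵥ P.mulVec (Ahat.mulVec v) = v ⬝ᵥ (P * Ahat).mulVec v := by
    rw [mulVec_mulVec]
  have hsym2 : v ⬝ᵥ (Ahatᵀ * P).mulVec v = v ⬝ᵥ (P * Ahat).mulVec v := by
    rw [← mulVec_mulVec, dotProduct_mulVec, vecMul_transpose, hAP]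
  -- quadratic term via KYP1
  have hLL : v ⬝ᵥ (Lᵀ * L).mulVec v = w ⬝ᵥ w := by
    rw [← mulVec_mulVec, dotProduct_mulVec, vecMul_transpose, hw]
  have hquad : (2 : ℝ) * (v ⬝ᵥ (P * Ahat).mulVec v)
      = -(w ⬝ᵥ w) - (ε / 2) * (v ⬝ᵥ P.mulVec v) := by
    have h := congrArg (fun M : Matrix (Fin m) (Fin m) ℝ => v ⬝ᵥ M.mulVec v) hKYP1
    simp only [← hAhat, add_mulVec, sub_mulVec, neg_mulVec, smul_mulVec,
      dotProduct_add, dotProduct_sub, dotProduct_neg, dotProduct_smul] at h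
    rw [hsym2] at h
    rw [hLL] at h
    simp only [smul_eq_mul] at h
    linarith
  -- expand LHS
  rw [hd]
  rw [mulVec_sub, mulVec_smul, sub_dotProduct, dotProduct_sub, smul_dotProduct,
    dotProduct_smul]
  rw [hAP, hPA, hBP, hPB]
  -- completed square
  have hsq : 0 ≤ (w - ν • J) ⬝ᵥ (w - ν • J) :=
    Finset.sum_nonneg fun i _ => mul_self_nonneg _
  have hsq' : 0 ≤ w ⬝ᵥ w - 2 * ν * (J ⬝ᵥ w) + ν ^ 2 * (2 / (β - α)) := by
    have e : (w - ν • J) ⬝ᵥ (w - ν • J)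
        = w ⬝ᵥ w - 2 * ν * (J ⬝ᵥ w) + ν ^ 2 * (J ⬝ᵥ J) := by
      simp [sub_dotProduct, dotProduct_sub, smul_dotProduct, dotProduct_smul,
        dotProduct_comm w J]
      ring
    rw [e, hKYP3] at hsq; exact hsq
  have hβα : (0 : ℝ) < β - α := by linarith
  have hsec : ν ^ 2 ≤ (β - α) * (ν * y) := by
    have hs2 : ν * (β * y - N) = (β - α) * (ν * y) - ν ^ 2 := by rw [hν]; ring
    have := hsector
    rw [hν] at this ⊢
    nlinarith [hsector, hs2]
  have hsec' : 2 * ν ^ 2 / (β - α) ≤ 2 * (ν * y) := by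
    rw [div_le_iff₀ hβα]; nlinarith
  have h2 : 2 * ν * (J ⬝ᵥ w) ≤ w ⬝ᵥ w + 2 * ν ^ 2 / (β - α) := by
    have : ν ^ 2 * (2 / (β - α)) = 2 * ν ^ 2 / (β - α) := by ring
    linarith [hsq']
  simp only [smul_eq_mul]
  nlinarith [hquad, h2, hsec']


lemma gronwall_exp {V D : ℝ → ℝ} {c : ℝ} (hc : 0 < c)
    (hV : ∀ t, 0 ≤ t → HasDerivAt V (D t) t)
    (hD : ∀ t, 0 ≤ t → D t ≤ -c * V t) :
    ∀ t, 0 ≤ t → V t ≤ V 0 * Real.exp (-c * t) := by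
  set W := fun t => V t * Real.exp (c * t) with hWdef
  have hW : ∀ t, 0 ≤ t → HasDerivAt W ((D t + c * V t) * Real.exp (c * t)) t := by
    intro t ht
    have he : HasDerivAt (fun s => Real.exp (c * s)) (c * Real.exp (c * t)) t := by
      have h := (Real.hasDerivAt_exp (c * t)).comp t ((hasDerivAt_id t).const_mul c)
      exact h.congr_deriv (by simp [mul_comm])
    have h := (hV t ht).mul he
    exact h.congr_deriv (by ring)
  have hanti : AntitoneOn W (Set.Ici (0 : ℝ)) := by
    apply antitoneOn_of_deriv_nonpos (convex_Ici 0)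
    · intro t ht; exact (hW t ht).continuousAt.continuousWithinAt
    · intro t ht
      rw [interior_Ici] at ht
      exact (hW t ht.le).differentiableAt.differentiableWithinAt
    · intro t ht
      rw [interior_Ici] at ht
      rw [(hW t ht.le).deriv]
      have h1 := hD t ht.le
      exact mul_nonpos_of_nonpos_of_nonneg (by linarith) (Real.exp_pos _).le
  intro t ht
  have h := hanti Set.self_mem_Ici ht ht
  have h0 : W 0 = V 0 := by simp [hWdef]
  rw [h0] at h
  have hexp : (0:ℝ) < Real.exp (c * t) := Real.exp_pos _
  rw [neg_mul, Real.exp_neg, ← div_eq_mul_inv, le_div_iff₀ hexp]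
  exact h

lemma posdef_coercive {m : ℕ} {P : Matrix (Fin m) (Fin m) ℝ} (hP : P.PosDef) :
    ∃ c > 0, ∀ v : Fin m → ℝ, c * ‖v‖ ^ 2 ≤ v ⬝ᵥ P.mulVec v := by
  have hg : Continuous fun v : Fin m → ℝ => v ⬝ᵥ P.mulVec v := by
    simp only [dotProduct, mulVec]
    exact continuous_finset_sum _ fun i _ => (continuous_apply i).mul
      (continuous_finset_sum _ fun j _ => continuous_const.mul (continuous_apply j))
  have hhom : ∀ (a : ℝ) (v : Fin m → ℝ),
      (a • v) ⬝ᵥ P.mulVec (a • v) = a ^ 2 * (v ⬝ᵥ P.mulVec v) := by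
    intro a v
    rw [mulVec_smul, smul_dotProduct, dotProduct_smul, smul_eq_mul, smul_eq_mul]
    ring
  have hpos : ∀ v : Fin m → ℝ, v ≠ 0 → 0 < v ⬝ᵥ P.mulVec v := by
    intro v hv
    have := hP.dotProduct_mulVec_pos hv
    simpa using this
  rcases Nat.eq_zero_or_pos m with hm | hm
  · refine ⟨1, one_pos, fun v => ?_⟩
    subst hm
    have hv : v = 0 := Subsingleton.elim _ _
    have h1 : ‖(0 : Fin 0 → ℝ)‖ = 0 := norm_zero
    have h2 : (0 : Fin 0 → ℝ) ⬝ᵥ P.mulVec 0 = 0 := zero_dotProduct _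
    rw [hv, h1, h2]; norm_num
  · haveI : Nonempty (Fin m) := ⟨⟨0, hm⟩⟩
    have hsph : (Metric.sphere (0 : Fin m → ℝ) 1).Nonempty :=
      NormedSpace.sphere_nonempty.mpr zero_le_one
    obtain ⟨u, hu, hmin⟩ := (isCompact_sphere (0 : Fin m → ℝ) 1).exists_isMinOn
      hsph hg.continuousOn
    have hu1 : ‖u‖ = 1 := by simpa using hu
    have hu0 : u ≠ 0 := by intro h; rw [h] at hu1; simp at hu1
    refine ⟨u ⬝ᵥ P.mulVec u, hpos u hu0, fun v => ?_⟩
    rcases eq_or_ne v 0 with rfl | hv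
    · simp
    · have hr : (0:ℝ) < ‖v‖ := norm_pos_iff.mpr hv
      set u' := ‖v‖⁻¹ • v with hu'
      have hu'sph : u' ∈ Metric.sphere (0 : Fin m → ℝ) 1 := by
        simp [hu', norm_smul, abs_of_pos (inv_pos.mpr hr), inv_mul_cancel₀ hr.ne']
      have hvu : v = ‖v‖ • u' := by
        rw [hu', smul_smul, mul_inv_cancel₀ hr.ne', one_smul]
      have hmin' : u ⬝ᵥ P.mulVec u ≤ u' ⬝ᵥ P.mulVec u' := hmin hu'sph
      calc (u ⬝ᵥ P.mulVec u) * ‖v‖ ^ 2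
          ≤ (u' ⬝ᵥ P.mulVec u') * ‖v‖ ^ 2 :=
            mul_le_mul_of_nonneg_right hmin' (sq_nonneg _)
        _ = v ⬝ᵥ P.mulVec v := by
            rw [hu', hhom]
            field_simp


lemma quad_deriv {m : ℕ} (P : Matrix (Fin m) (Fin m) ℝ) {x : ℝ → Fin m → ℝ}
    {d : Fin m → ℝ} {t : ℝ} (hx : HasDerivAt x d t) :
    HasDerivAt (fun s => x s ⬝ᵥ P.mulVec (x s))
      (d ⬝ᵥ P.mulVec (x t) + x t ⬝ᵥ P.mulVec d) t := by
  have hxi : ∀ i, HasDerivAt (fun s => x s i) (d i) t := hasDerivAt_pi.mp hx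
  have h : HasDerivAt (fun s => ∑ i, ∑ j, x s i * (P i j * x s j))
      (∑ i, ∑ j, (d i * (P i j * x t j) + x t i * (P i j * d j))) t := by
    apply HasDerivAt.fun_sum; intro i _
    apply HasDerivAt.fun_sum; intro j _
    exact (hxi i).mul ((hxi j).const_mul (P i j))
  have e1 : (fun s => ∑ i, ∑ j, x s i * (P i j * x s j))
      = fun s => x s ⬝ᵥ P.mulVec (x s) := by
    funext s; simp [dotProduct, mulVec, Finset.mul_sum]
  have e2 : (∑ i, ∑ j, (d i * (P i j * x t j) + x t i * (P i j * d j)))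
      = d ⬝ᵥ P.mulVec (x t) + x t ⬝ᵥ P.mulVec d := by
    simp [dotProduct, mulVec, Finset.mul_sum, Finset.sum_add_distrib]
  rw [e1, e2] at h; exact h


/-- The `M = 0` case of Theorem 1, recovering the standard Circle Criterion:
under the ε-KYP conditions for the shifted realization
`(A - αBC, B, C, 1/(β-α))` and the sector condition
`(n(t,y) - αy)(βy - n(t,y)) ≥ 0`, the Lyapunov function `V = (1/2)xᵀPx` decays
exponentially along solutions of `x' = A x - B n(t, Cx)`, and `x(t) → 0`. -/
theorem circle_criterion {m p : ℕ}
    (A : Matrix (Fin m) (Fin m) ℝ) (B : Fin m → ℝ) (C : Fin m → ℝ)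
    (α β ε : ℝ) (hαβ : α < β) (hε : 0 < ε)
    (P : Matrix (Fin m) (Fin m) ℝ) (hP : P.PosDef)
    (L : Matrix (Fin p) (Fin m) ℝ) (J : Fin p → ℝ)
    (hKYP1 : P * (A - α • vecMulVec B C) + (A - α • vecMulVec B C)ᵀ * P
                = -(Lᵀ * L) - (ε / 2) • P)
    (hKYP2 : P.mulVec B = C - Lᵀ.mulVec J)
    (hKYP3 : J ⬝ᵥ J = 2 / (β - α))
    (n : ℝ → ℝ → ℝ) (hn : Continuous fun q : ℝ × ℝ => n q.1 q.2)
    (hsector : ∀ t y, 0 ≤ (n t y - α * y) * (β * y - n t y))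
    (x : ℝ → Fin m → ℝ)
    (hx : ∀ t, 0 ≤ t → HasDerivAt x (A.mulVec (x t) - n t (C ⬝ᵥ x t) • B) t) :
    (∀ t, 0 ≤ t → (1 / 2) * (x t ⬝ᵥ P.mulVec (x t))
        ≤ (1 / 2) * (x 0 ⬝ᵥ P.mulVec (x 0)) * Real.exp (-(ε / 2) * t)) ∧
      Tendsto x atTop (nhds 0) := by
  have hPsymm : Pᵀ = P := by
    have h := hP.1
    simpa [Matrix.IsHermitian] using h
  set V : ℝ → ℝ := fun t => x t ⬝ᵥ P.mulVec (x t) with hV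
  set D : ℝ → ℝ := fun t =>
    (A.mulVec (x t) - n t (C ⬝ᵥ x t) • B) ⬝ᵥ P.mulVec (x t)
      + x t ⬝ᵥ P.mulVec (A.mulVec (x t) - n t (C ⬝ᵥ x t) • B) with hD
  have hVd : ∀ t, 0 ≤ t → HasDerivAt V (D t) t := fun t ht => quad_deriv P (hx t ht)
  have hDb : ∀ t, 0 ≤ t → D t ≤ -(ε / 2) * V t := fun t ht =>
    key_ineq A B C α β ε hαβ P hPsymm L J hKYP1 hKYP2 hKYP3 (x t)
      (n t (C ⬝ᵥ x t)) (hsector t _)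
  have hgron := gronwall_exp (by positivity : (0:ℝ) < ε / 2) hVd hDb
  have hmain : ∀ t, 0 ≤ t → (1 / 2) * (x t ⬝ᵥ P.mulVec (x t))
      ≤ (1 / 2) * (x 0 ⬝ᵥ P.mulVec (x 0)) * Real.exp (-(ε / 2) * t) := by
    intro t ht
    have h := hgron t ht
    have : V t ≤ V 0 * Real.exp (-(ε / 2) * t) := h
    simp only [hV] at this
    nlinarith [this]
  refine ⟨hmain, ?_⟩
  obtain ⟨c, hc, hcoer⟩ := posdef_coercive hP
  have hexp : Tendsto (fun t : ℝ => Real.exp (-(ε / 2) * t)) atTop (nhds 0) := by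
    have h1 : Tendsto (fun t : ℝ => -(ε / 2) * t) atTop atBot :=
      Tendsto.const_mul_atTop_of_neg (by linarith : -(ε / 2) < 0) tendsto_id
    exact Real.tendsto_exp_atBot.comp h1
  have hupper : Tendsto (fun t : ℝ => (V 0 / c) * Real.exp (-(ε / 2) * t)) atTop (nhds 0) := by
    have := hexp.const_mul (V 0 / c)
    simpa using this
  have hnorm2 : Tendsto (fun t => ‖x t‖ ^ 2) atTop (nhds 0) := by
    apply tendsto_of_tendsto_of_tendsto_of_le_of_le' tendsto_const_nhds hupper
    · exact Eventually.of_forall fun t => sq_nonneg _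
    · filter_upwards [eventually_ge_atTop (0:ℝ)] with t ht
      have h1 : c * ‖x t‖ ^ 2 ≤ V t := hcoer (x t)
      have h2 : V t ≤ V 0 * Real.exp (-(ε / 2) * t) := hgron t ht
      rw [div_mul_eq_mul_div, le_div_iff₀ hc]
      nlinarith
  have hnorm : Tendsto (fun t => ‖x t‖) atTop (nhds 0) := by
    have h : Tendsto (fun t => Real.sqrt (‖x t‖ ^ 2)) atTop (nhds (Real.sqrt 0)) :=
      hnorm2.sqrt
    have he : (fun t => Real.sqrt (‖x t‖ ^ 2)) = fun t => ‖x t‖ := by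
      funext t; exact Real.sqrt_sq (norm_nonneg _)
    rw [he] at h
    simpa using h
  exact tendsto_zero_iff_norm_tendsto_zero.mpr hnorm
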